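/- Let $\theta\in\mathbb R$, $t=\sin\theta$, $s=\cos\theta$, and define the infinite real matrix $\mathsf C(\theta)$ indexed by $\mathbb N\times\mathbb N$ by: $\mathsf C(\theta)_{0,j}=t^{j}s$ for $j\geq 0$; for $i\geq 1$: $\mathsf C(\theta)_{i,i-1}=-t$, $\mathsf C(\theta)_{i,j}=t^{j-i}s^2$ for $j\geq i$, and $\mathsf C(\theta)_{i,j}=0$ for $j<i-1$. Then the transpose satisfies $\mathsf C(\theta)^{\top}\mathsf C(\theta)=1_{\mathbb N}$, where the matrix product is entrywise given by absolutely convergent series. -/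

import Mathlib

/-- The "shifting rotation" matrix `C(θ)`: row 0 is `(s, ts, t²s, …)`,
and for `i ≥ 1` the row is `(0,…,0,-t, s², ts², t²s², …)` with `-t` in column `i-1`. -/
noncomputable def Cmat (θ : ℝ) (i j : ℕ) : ℝ :=
  if i = 0 then (Real.sin θ) ^ j * Real.cos θ
  else if j + 1 = i then -(Real.sin θ)
  else if i ≤ j then (Real.sin θ) ^ (j - i) * (Real.cos θ) ^ 2
  else 0

lemma Cmat_shift (θ : ℝ) (j i : ℕ) : Cmat θ (j+2) (i+1) = Cmat θ (j+1) i := by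
  have he : i + 1 - (j + 2) = i - (j + 1) := by omega
  unfold Cmat
  rw [he]
  split_ifs <;> first | rfl | omega | exact False.elim ‹False›

lemma sumS0 (θ : ℝ) (k : ℕ) :
    ∑ j ∈ Finset.range (k+2), Cmat θ j 0 * Cmat θ j k = if 0 = k then 1 else 0 := by
  rw [← Finset.sum_subset (Finset.range_subset_range.2 (by omega) : Finset.range 2 ⊆ Finset.range (k+2))]
  · rw [Finset.sum_range_succ, Finset.sum_range_one]
    cases k with
    | zero =>
      simp [Cmat]
      nlinarith [Real.sin_sq_add_cos_sq θ]
    | succ n =>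
      simp [Cmat, pow_succ]
      ring
  · intro j _ hj2
    have h2 : 2 ≤ j := by simp at hj2; omega
    have h : Cmat θ j 0 = 0 := by
      unfold Cmat
      rw [if_neg (by omega), if_neg (by omega), if_neg (by omega)]
    simp [h]

lemma sumS (θ : ℝ) (i k : ℕ) :
    ∑ j ∈ Finset.range (max i k + 2), Cmat θ j i * Cmat θ j k = if i = k then 1 else 0 := by
  induction i generalizing k with
  | zero => simpa using sumS0 θ k
  | succ i ih =>
    cases k with
    | zero =>
      have h := sumS0 θ (i+1)
      rw [Finset.sum_congr rfl (fun j _ => mul_comm (Cmat θ j (i+1)) (Cmat θ j 0))]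
      simp only [Nat.max_eq_left (Nat.zero_le _)]
      rw [h]
      simp
    | succ k =>
      have hmax : max (i+1) (k+1) + 2 = (max i k + 1) + 1 + 1 := by omega
      rw [hmax, Finset.sum_range_succ', Finset.sum_range_succ']
      have hsh : ∀ j, Cmat θ (j+1+1) (i+1) * Cmat θ (j+1+1) (k+1)
          = Cmat θ (j+1) i * Cmat θ (j+1) k := by
        intro j
        rw [Cmat_shift θ j i, Cmat_shift θ j k]
      rw [Finset.sum_congr rfl (fun j _ => hsh j)]
      have hih := ih k
      rw [Finset.sum_range_succ'] at hih
      have hδ : (if i + 1 = k + 1 then (1:ℝ) else 0) = if i = k then 1 else 0 := by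
        simp
      rw [hδ]
      have c0 : ∀ m, Cmat θ 0 m = Real.sin θ ^ m * Real.cos θ := by
        intro m; simp [Cmat]
      have c1 : ∀ m, Cmat θ 1 (m+1) = Real.sin θ ^ m * Real.cos θ ^ 2 := by
        intro m
        unfold Cmat
        rw [if_neg one_ne_zero, if_neg (by omega : ¬ m + 1 + 1 = 1),
          if_pos (by omega : 1 ≤ m + 1), Nat.add_sub_cancel]
      have hkey : Cmat θ 1 (i+1) * Cmat θ 1 (k+1) + Cmat θ 0 (i+1) * Cmat θ 0 (k+1)
          = Cmat θ 0 i * Cmat θ 0 k := by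
        rw [c1, c1, c0, c0, c0, c0]
        linear_combination (Real.sin θ ^ i * Real.sin θ ^ k * Real.cos θ ^ 2) *
          Real.sin_sq_add_cos_sq θ
      linarith [hih, hkey]

/-- `C(θ)ᵀ C(θ) = 1`: entrywise, the series `∑_j C(θ)_{j,i} C(θ)_{j,k}`
converges (absolutely) to `δ_{i,k}`. -/
theorem Cmat_transpose_mul_self (θ : ℝ) (i k : ℕ) :
    HasSum (fun j : ℕ => Cmat θ j i * Cmat θ j k) (if i = k then 1 else 0) := by
  rw [← sumS θ i k]
  apply hasSum_sum_of_ne_finset_zero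
  intro j hj
  have hj' : max i k + 2 ≤ j := by simpa using hj
  have h : Cmat θ j i = 0 := by
    unfold Cmat
    rw [if_neg (by omega), if_neg (by omega), if_neg (by omega)]
  simp [h]
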